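/- Fix d ∈ ℝ. Let I ⊆ ℝ be an open interval and F₂, F₃ : I → ℝ be C² functions such that F₃ and F₃′ vanish nowhere on I and such that F₂′(z) + z·F₃′(z) + d·F₃(z) = 0 and 2F₃(z)F₃″(z) − 3(F₃′(z))² = 0 hold on I. Then there exist constants C₂, C₃, C₄ with C₄ ≠ 0 and z + C₃ ≠ 0 for all z ∈ I, such that F₃(z) = C₄/(z+C₃)² and F₂(z) = C₃C₄/(z+C₃)² − (2−d)C₄/(z+C₃) + C₂ on I. -/

import Mathlib

private lemma const_of_hasDerivAt_zero {I : Set ℝ} (hIo : IsOpen I) (hc : Convex ℝ I)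
    {f : ℝ → ℝ} (hf : ∀ x ∈ I, HasDerivAt f 0 x) {x y : ℝ} (hx : x ∈ I) (hy : y ∈ I) :
    f x = f y := by
  apply hc.is_const_of_fderivWithin_eq_zero (f := f)
    (fun z hz => ((hf z hz).differentiableAt).differentiableWithinAt) ?_ hx hy
  intro z hz
  rw [fderivWithin_of_isOpen hIo hz, (hf z hz).hasFDerivAt.fderiv]
  ext
  simp

/-- if `F₂, F₃` are C² on an open interval, `F₃` and `F₃′` vanish nowhere,
and `F₂′ + z F₃′ + d F₃ = 0`, `2 F₃ F₃″ − 3 (F₃′)² = 0` hold, then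
`F₃(z) = C₄/(z+C₃)²` and `F₂(z) = C₃C₄/(z+C₃)² − (2−d)C₄/(z+C₃) + C₂` for some
constants `C₂, C₃, C₄` with `C₄ ≠ 0` and `z + C₃ ≠ 0` on the interval. -/
theorem stmt_9 (d : ℝ) (I : Set ℝ) (hIopen : IsOpen I) (hIconn : I.OrdConnected)
    (F₂ F₃ : ℝ → ℝ) (hF₂ : ContDiffOn ℝ 2 F₂ I) (hF₃ : ContDiffOn ℝ 2 F₃ I)
    (hF₃ne : ∀ z ∈ I, F₃ z ≠ 0) (hF₃'ne : ∀ z ∈ I, deriv F₃ z ≠ 0)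
    (heq1 : ∀ z ∈ I, deriv F₂ z + z * deriv F₃ z + d * F₃ z = 0)
    (heq2 : ∀ z ∈ I, 2 * F₃ z * deriv (deriv F₃) z - 3 * (deriv F₃ z) ^ 2 = 0) :
    ∃ C₂ C₃ C₄ : ℝ, C₄ ≠ 0 ∧ (∀ z ∈ I, z + C₃ ≠ 0) ∧
      ∀ z ∈ I,
        F₃ z = C₄ / (z + C₃) ^ 2 ∧
        F₂ z = C₃ * C₄ / (z + C₃) ^ 2 - (2 - d) * C₄ / (z + C₃) + C₂ := by
  rcases I.eq_empty_or_nonempty with hI | ⟨z₀, hz₀⟩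
  · exact ⟨0, 0, 1, one_ne_zero, by simp [hI], by simp [hI]⟩
  have hconv : Convex ℝ I := convex_iff_ordConnected.mpr hIconn
  -- basic differentiability
  have hdF₃ : ∀ x ∈ I, HasDerivAt F₃ (deriv F₃ x) x := fun x hx =>
    ((hF₃.contDiffAt (hIopen.mem_nhds hx)).differentiableAt (by norm_num)).hasDerivAt
  have hF₃' : ContDiffOn ℝ 1 (deriv F₃) I := hF₃.deriv_of_isOpen hIopen (by norm_num)
  have hdF₃' : ∀ x ∈ I, HasDerivAt (deriv F₃) (deriv (deriv F₃) x) x := fun x hx =>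
    ((hF₃'.contDiffAt (hIopen.mem_nhds hx)).differentiableAt (by norm_num)).hasDerivAt
  have hdF₂ : ∀ x ∈ I, HasDerivAt F₂ (deriv F₂ x) x := fun x hx =>
    ((hF₂.contDiffAt (hIopen.mem_nhds hx)).differentiableAt (by norm_num)).hasDerivAt
  -- the function u = F₃ / F₃' + z/2 has derivative 0
  set u : ℝ → ℝ := fun z => F₃ z / deriv F₃ z + z / 2 with hu_def
  have hdu : ∀ x ∈ I, HasDerivAt u 0 x := by
    intro x hx
    have h1 : HasDerivAt (fun z => F₃ z / deriv F₃ z)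
        ((deriv F₃ x * deriv F₃ x - F₃ x * deriv (deriv F₃) x) / (deriv F₃ x) ^ 2) x :=
      (hdF₃ x hx).div (hdF₃' x hx) (hF₃'ne x hx)
    have h2 : HasDerivAt (fun z : ℝ => z / 2) (1 / 2 : ℝ) x := by
      simpa using (hasDerivAt_id x).div_const 2
    have := h1.fun_add h2
    refine this.congr_deriv ?_
    have h3 := heq2 x hx
    have h4 := hF₃'ne x hx
    field_simp
    nlinarith [sq_nonneg (deriv F₃ x)]
  set C₃ : ℝ := -2 * (F₃ z₀ / deriv F₃ z₀) - z₀ with hC₃_def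
  have hukey : ∀ z ∈ I, F₃ z / deriv F₃ z = -(z + C₃) / 2 := by
    intro z hz
    have := const_of_hasDerivAt_zero hIopen hconv hdu hz hz₀
    simp only [hu_def] at this
    rw [hC₃_def]; linarith
  have hzC₃ : ∀ z ∈ I, z + C₃ ≠ 0 := by
    intro z hz h0
    have := hukey z hz
    rw [h0] at this
    have h2 : F₃ z / deriv F₃ z = 0 := by simpa using this
    rcases div_eq_zero_iff.mp h2 with h | h
    · exact hF₃ne z hz h
    · exact hF₃'ne z hz h
  -- F₃' z = -2 F₃ z / (z + C₃)
  have hF₃'eq : ∀ z ∈ I, deriv F₃ z = -2 * F₃ z / (z + C₃) := by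
    intro z hz
    have h1 := hukey z hz
    have h2 := hF₃'ne z hz
    have h3 := hzC₃ z hz
    field_simp at h1 ⊢
    linarith
  -- P = F₃ * (z+C₃)^2 is constant
  set C₄ : ℝ := F₃ z₀ * (z₀ + C₃) ^ 2 with hC₄_def
  have hdP : ∀ x ∈ I, HasDerivAt (fun z => F₃ z * (z + C₃) ^ 2) 0 x := by
    intro x hx
    have h1 : HasDerivAt (fun z : ℝ => z + C₃) 1 x := (hasDerivAt_id x).add_const _
    have h2 : HasDerivAt (fun z : ℝ => (z + C₃) ^ 2) (2 * (x + C₃)) x := by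
      simpa using h1.fun_pow 2
    have := (hdF₃ x hx).fun_mul h2
    refine this.congr_deriv ?_
    rw [hF₃'eq x hx]
    field_simp [hzC₃ x hx]
    ring
  have hPz : ∀ z ∈ I, F₃ z * (z + C₃) ^ 2 = C₄ := fun z hz =>
    const_of_hasDerivAt_zero hIopen hconv hdP hz hz₀
  have hC₄ne : C₄ ≠ 0 := by
    rw [hC₄_def]
    exact mul_ne_zero (hF₃ne z₀ hz₀) (pow_ne_zero _ (hzC₃ z₀ hz₀))
  have hF₃eq : ∀ z ∈ I, F₃ z = C₄ / (z + C₃) ^ 2 := by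
    intro z hz
    have := hPz z hz
    rw [eq_div_iff (pow_ne_zero 2 (hzC₃ z hz))]
    linarith
  -- now F₂
  set G : ℝ → ℝ := fun z => C₃ * C₄ / (z + C₃) ^ 2 - (2 - d) * C₄ / (z + C₃) with hG_def
  have hdQ : ∀ x ∈ I, HasDerivAt (fun z => F₂ z - G z) 0 x := by
    intro x hx
    have hne := hzC₃ x hx
    have h1 : HasDerivAt (fun z : ℝ => z + C₃) 1 x := (hasDerivAt_id x).add_const _
    have h2 : HasDerivAt (fun z : ℝ => (z + C₃) ^ 2) (2 * (x + C₃)) x := by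
      simpa using h1.fun_pow 2
    have h3 : HasDerivAt (fun z : ℝ => C₃ * C₄ / (z + C₃) ^ 2)
        ((0 * (x + C₃) ^ 2 - C₃ * C₄ * (2 * (x + C₃))) / ((x + C₃) ^ 2) ^ 2) x :=
      (hasDerivAt_const x (C₃ * C₄)).div h2 (pow_ne_zero _ hne)
    have h4 : HasDerivAt (fun z : ℝ => (2 - d) * C₄ / (z + C₃))
        ((0 * (x + C₃) - (2 - d) * C₄ * 1) / (x + C₃) ^ 2) x :=
      (hasDerivAt_const x ((2 - d) * C₄)).div h1 hne
    have hdG : HasDerivAt G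
        ((0 * (x + C₃) ^ 2 - C₃ * C₄ * (2 * (x + C₃))) / ((x + C₃) ^ 2) ^ 2
          - (0 * (x + C₃) - (2 - d) * C₄ * 1) / (x + C₃) ^ 2) x := h3.sub h4
    have := (hdF₂ x hx).fun_sub hdG
    refine this.congr_deriv ?_
    have e1 := heq1 x hx
    have e2 := hF₃eq x hx
    have e3 := hF₃'eq x hx
    have e4 : deriv F₂ x = -(x * deriv F₃ x) - d * F₃ x := by linarith
    rw [e4, e3, e2]
    field_simp
    ring
  set C₂ : ℝ := F₂ z₀ - G z₀ with hC₂_def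
  refine ⟨C₂, C₃, C₄, hC₄ne, hzC₃, fun z hz => ⟨hF₃eq z hz, ?_⟩⟩
  have := const_of_hasDerivAt_zero hIopen hconv hdQ hz hz₀
  rw [hC₂_def, hG_def]
  simp only [hG_def] at this
  linarith
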